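/- Let T be a subsemigroup of B(n) containing 0. Then T is a nilpotent semigroup (T^k = {0} for some k ≥ 1) if and only if the corresponding binary relation {(i,j) : (i,j) ∈ T} is a strict partial order (irreflexive and transitive) on {1,...,n}; equivalently, the directed graph with edge set {(i,j) : (i,j) ∈ T} is acyclic. -/

import Mathlib

/-- The aperiodic Brandt semigroup `B(n)` on `({1..n} × {1..n}) ∪ {0}`,
with `none` playing the role of the zero element. -/
abbrev B (n : ℕ) := Option (Fin n × Fin n)

/-- Multiplication in `B(n)`: `(i,j)(k,l) = (i,l)` if `j = k`, and `0` otherwise. -/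
def bmul {n : ℕ} : B n → B n → B n
  | some (i, j), some (k, l) => if j = k then some (i, l) else none
  | _, _ => none

/-- A subset of `B(n)` is a subsemigroup if it is closed under multiplication. -/
def IsSub {n : ℕ} (T : Set (B n)) : Prop :=
  ∀ x ∈ T, ∀ y ∈ T, bmul x y ∈ T

/-- The subsemigroup of `B(n)` generated by a subset. -/
def gen {n : ℕ} (X : Set (B n)) : Set (B n) :=
  ⋂₀ {T | IsSub T ∧ X ⊆ T}

/-- `X` is a face of the subsemigroup complex `H(B(n))`: it admits an enumeration
producing a strictly increasing chain of generated subsemigroups. -/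
def IsFace {n : ℕ} (X : Set (B n)) : Prop :=
  ∃ l : List (B n), l.Nodup ∧ {x | x ∈ l} = X ∧
    ∀ (i : ℕ) (h : i < l.length), l.get ⟨i, h⟩ ∉ gen {x | x ∈ l.take i}

/-- A facet is a maximal face. -/
def IsFacet {n : ℕ} (X : Set (B n)) : Prop :=
  IsFace X ∧ ∀ Y : Set (B n), IsFace Y → X ⊆ Y → X = Y

/-- Product `x * y₁ * ⋯ * y_k` in `B(n)`. -/
def bprod {n : ℕ} : B n → List (B n) → B n
  | x, [] => x
  | x, y :: l => bprod (bmul x y) l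

/-- Closure under the inverse operation `(i,j) ↦ (j,i)`. -/
def InvClosed {n : ℕ} (T : Set (B n)) : Prop :=
  ∀ i j : Fin n, some (i, j) ∈ T → some (j, i) ∈ T

/-- A nilpotent subsemigroup of `B(n)` containing `0`: some power is `{0}`. -/
def IsNilpSub {n : ℕ} (T : Set (B n)) : Prop :=
  IsSub T ∧ none ∈ T ∧ ∃ k : ℕ, 1 ≤ k ∧
    ∀ (x : B n) (l : List (B n)), x ∈ T → (∀ y ∈ l, y ∈ T) →
      l.length + 1 = k → bprod x l = none
lemma bprod_none {n : ℕ} (l : List (B n)) : bprod (none : B n) l = none := by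
  induction l with
  | nil => rfl
  | cons y l ih => simpa [bprod, bmul] using ih

lemma bprod_rep {n : ℕ} (i : Fin n) (m : ℕ) :
    bprod (some (i, i)) (List.replicate m (some (i, i))) = some (i, i) := by
  induction m with
  | zero => rfl
  | succ m ih => simpa [List.replicate, bprod, bmul] using ih

section
variable {n : ℕ} (T : Set (B n)) (hT : IsSub T)
  (hirr : ∀ i : Fin n, some (i, i) ∉ T)

noncomputable def rk (u : Fin n) : ℕ := {v : Fin n | some (v, u) ∈ T}.ncard

include hirr in
lemma rk_lt (u : Fin n) : rk T u < n := by
  have h : {v : Fin n | some (v, u) ∈ T} ⊂ Set.univ := by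
    refine ⟨Set.subset_univ _, fun hsub => ?_⟩
    exact hirr u (hsub (Set.mem_univ u))
  have := Set.ncard_lt_ncard h (Set.finite_univ)
  simpa [rk, Set.ncard_univ] using this

include hT hirr in
lemma rk_mono {u v : Fin n} (h : some (u, v) ∈ T) : rk T u < rk T v := by
  apply Set.ncard_lt_ncard _ (Set.toFinite _)
  constructor
  · intro w hw
    have := hT _ hw _ h
    simpa [bmul] using this
  · intro hsub
    exact hirr u (hsub h)

include hT hirr in
lemma bprod_rk : ∀ (l : List (B n)) (a c b : Fin n),
    (∀ y ∈ l, y ∈ T) → bprod (some (a, c)) l = some (a, b) →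
    rk T c + l.length ≤ rk T b := by
  intro l
  induction l with
  | nil =>
    intro a c b _ h
    simp only [bprod] at h
    cases h
    simp
  | cons y l ih =>
    intro a c b hl h
    simp only [bprod] at h
    match y with
    | none => rw [show bmul (some (a,c)) none = none from rfl, bprod_none] at h; exact absurd h (by simp)
    | some (d, e) =>
      by_cases hcd : c = d
      · subst hcd
        rw [show bmul (some (a,c)) (some (c,e)) = some (a,e) from by simp [bmul]] at h
        have hy : some (c, e) ∈ T := hl _ (by simp)
        have h1 : rk T c < rk T e := rk_mono T hT hirr hy
        have h2 := ih a e b (fun y hy' => hl y (by simp [hy'])) h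
        simp only [List.length_cons]
        omega
      · rw [show bmul (some (a,c)) (some (d,e)) = none from by simp [bmul, hcd], bprod_none] at h
        exact absurd h (by simp)
end

lemma bprod_fst {n : ℕ} : ∀ (l : List (B n)) (a c : Fin n) (p : Fin n × Fin n),
    bprod (some (a, c)) l = some p → p.1 = a := by
  intro l
  induction l with
  | nil => intro a c p h; cases h; rfl
  | cons y l ih =>
    intro a c p h
    simp only [bprod] at h
    match y with
    | none => rw [show bmul (some (a,c)) none = none from rfl, bprod_none] at h; exact absurd h (by simp)
    | some (d, e) =>
      by_cases hcd : c = d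
      · subst hcd
        rw [show bmul (some (a,c)) (some (c,e)) = some (a,e) from by simp [bmul]] at h
        exact ih a e p h
      · rw [show bmul (some (a,c)) (some (d,e)) = none from by simp [bmul, hcd], bprod_none] at h
        exact absurd h (by simp)


/-- A subsemigroup `T` of `B(n)` containing `0` is nilpotent (`T^k = {0}` for some
`k ≥ 1`) iff the corresponding relation is a strict partial order (irreflexive and
transitive); equivalently, iff the associated directed graph is acyclic. -/
theorem stmt4 (n : ℕ) (T : Set (B n)) (h0 : none ∈ T) (hT : IsSub T) :
    ((∃ k : ℕ, 1 ≤ k ∧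
        ∀ (x : B n) (l : List (B n)), x ∈ T → (∀ y ∈ l, y ∈ T) →
          l.length + 1 = k → bprod x l = none) ↔
      ((∀ i : Fin n, some (i, i) ∉ T) ∧
        (∀ i j k : Fin n, some (i, j) ∈ T → some (j, k) ∈ T → some (i, k) ∈ T))) ∧
    ((∃ k : ℕ, 1 ≤ k ∧
        ∀ (x : B n) (l : List (B n)), x ∈ T → (∀ y ∈ l, y ∈ T) →
          l.length + 1 = k → bprod x l = none) ↔
      ∀ i : Fin n, ¬ Relation.TransGen (fun a b => some (a, b) ∈ T) i i) := by
  have htrans : ∀ i j k : Fin n, some (i, j) ∈ T → some (j, k) ∈ T → some (i, k) ∈ T := by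
    intro i j k hij hjk
    have := hT _ hij _ hjk
    simpa [bmul] using this
  have hfwd : (∃ k : ℕ, 1 ≤ k ∧
      ∀ (x : B n) (l : List (B n)), x ∈ T → (∀ y ∈ l, y ∈ T) →
        l.length + 1 = k → bprod x l = none) → ∀ i : Fin n, some (i, i) ∉ T := by
    rintro ⟨k, hk, hnil⟩ i hi
    have := hnil (some (i, i)) (List.replicate (k - 1) (some (i, i))) hi
      (by intro y hy; simpa using (List.eq_of_mem_replicate hy) ▸ hi)
      (by simp; omega)
    rw [bprod_rep] at this
    exact absurd this (by simp)
  have hbwd : (∀ i : Fin n, some (i, i) ∉ T) → (∃ k : ℕ, 1 ≤ k ∧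
      ∀ (x : B n) (l : List (B n)), x ∈ T → (∀ y ∈ l, y ∈ T) →
        l.length + 1 = k → bprod x l = none) := by
    intro hirr
    refine ⟨n + 1, by omega, ?_⟩
    intro x l hx hl hlen
    match x with
    | none => exact bprod_none l
    | some (a, c) =>
      by_contra hne
      obtain ⟨p, hp⟩ := Option.ne_none_iff_exists'.mp hne
      obtain ⟨b1, b2⟩ := p
      have hfst : b1 = a := bprod_fst l a c (b1, b2) hp
      rw [hfst] at hp
      have h1 := bprod_rk T hT hirr l a c b2 hl hp
      have h2 := rk_lt T hirr b2
      omega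
  constructor
  · exact ⟨fun h => ⟨hfwd h, htrans⟩, fun h => hbwd h.1⟩
  · constructor
    · intro h i hti
      have heq := @Relation.transGen_eq_self
        (Fin n) (fun a b : Fin n => some (a, b) ∈ T) ⟨fun a b c => htrans a b c⟩
      rw [heq] at hti
      exact hfwd h i hti
    · intro h
      apply hbwd
      intro i hi
      exact h i (Relation.TransGen.single hi)
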